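/- For SDRs (A₁,B₁) and (A₂,B₂), the non-symmetric tensor product homotopy h₁⊗1 + (i₁p₁)⊗h₂ generally differs from its conjugate by the symmetry (1 2), which equals h₁⊗(i₂p₂) + 1⊗h₂; however, both are homotopies from (i₁p₁)⊗(i₂p₂) to the identity, so their average (1/2)(h₁⊗1 + (i₁p₁)⊗h₂ + h₁⊗(i₂p₂) + 1⊗h₂) also satisfies dh + hd = 1 − (i₁p₁)⊗(i₂p₂). -/

import Mathlib

open TensorProduct

noncomputable section

/-- The identity of `V p` viewed as a map `V p →ₗ V q` along an equality of degrees. -/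
def castLM {V : ℤ → Type} [∀ n, AddCommGroup (V n)] [∀ n, Module ℚ (V n)]
    {p q : ℤ} (h : p = q) : V p →ₗ[ℚ] V q := by subst h; exact LinearMap.id

/-- Degree-`n` part of the tensor product of two cochain complexes (of graded ℚ-modules):
`(V₁ ⊗ V₂)ⁿ = ⊕_{a+b=n} V₁ᵃ ⊗ V₂ᵇ`. -/
abbrev T2 (V₁ V₂ : ℤ → Type) [∀ n, AddCommGroup (V₁ n)] [∀ n, Module ℚ (V₁ n)]
    [∀ n, AddCommGroup (V₂ n)] [∀ n, Module ℚ (V₂ n)] (n : ℤ) : Type :=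
  DirectSum {p : ℤ × ℤ // p.1 + p.2 = n} (fun p => V₁ p.1.1 ⊗[ℚ] V₂ p.1.2)

section TOp

variable {V₁ V₂ W₁ W₂ : ℤ → Type}
  [∀ n, AddCommGroup (V₁ n)] [∀ n, Module ℚ (V₁ n)]
  [∀ n, AddCommGroup (V₂ n)] [∀ n, Module ℚ (V₂ n)]
  [∀ n, AddCommGroup (W₁ n)] [∀ n, Module ℚ (W₁ n)]
  [∀ n, AddCommGroup (W₂ n)] [∀ n, Module ℚ (W₂ n)]

/-- The tensor product `F ⊗ G` of a map `F` of degree `k₁` and a map `G` of degree `k₂`, with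
the Koszul sign convention `(F ⊗ G)(x ⊗ y) = (−1)^{|G||x|} F(x) ⊗ G(y)`. -/
def tOp (k₁ k₂ : ℤ) (F : ∀ a, V₁ a →ₗ[ℚ] W₁ (a + k₁)) (G : ∀ b, V₂ b →ₗ[ℚ] W₂ (b + k₂))
    (n : ℤ) : T2 V₁ V₂ n →ₗ[ℚ] T2 W₁ W₂ (n + (k₁ + k₂)) :=
  DirectSum.toModule ℚ _ _ (fun p =>
    ((-1 : ℚ) ^ (k₂ * p.1.1)) •
      ((DirectSum.lof ℚ {q : ℤ × ℤ // q.1 + q.2 = n + (k₁ + k₂)}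
          (fun q => W₁ q.1.1 ⊗[ℚ] W₂ q.1.2)
          ⟨(p.1.1 + k₁, p.1.2 + k₂), by have := p.2; dsimp at this ⊢; omega⟩).comp
        (TensorProduct.map (F p.1.1) (G p.1.2))))

/-- A degree-`0` map reindexed so that it has target degree `a + 0`. -/
def sh0 (f : ∀ a, V₁ a →ₗ[ℚ] W₁ a) (a : ℤ) : V₁ a →ₗ[ℚ] W₁ (a + 0) :=
  (castLM (show a = a + 0 by omega)).comp (f a)

end TOp

section Aux
variable {V : ℤ → Type} [∀ n, AddCommGroup (V n)] [∀ n, Module ℚ (V n)]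

@[simp] lemma castLM_rfl {p : ℤ} (h : p = p) (x : V p) : castLM (V := V) h x = x := rfl

@[simp] lemma castLM_castLM {p q r : ℤ} (h : p = q) (h' : q = r) (x : V p) :
    castLM (V := V) h' (castLM (V := V) h x) = castLM (h.trans h') x := by
  subst h; subst h'; rfl

lemma cast_natural {V W : ℤ → Type} [∀ n, AddCommGroup (V n)] [∀ n, Module ℚ (V n)]
    [∀ n, AddCommGroup (W n)] [∀ n, Module ℚ (W n)] (k : ℤ)
    (f : ∀ n, V n →ₗ[ℚ] W (n + k)) {p q : ℤ} (h : p = q) (x : V p) :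
    f q (castLM (V := V) h x) = castLM (V := W) (by rw [h]) (f p x) := by subst h; rfl

lemma cast_natural0 {V W : ℤ → Type} [∀ n, AddCommGroup (V n)] [∀ n, Module ℚ (V n)]
    [∀ n, AddCommGroup (W n)] [∀ n, Module ℚ (W n)]
    (f : ∀ n, V n →ₗ[ℚ] W n) {p q : ℤ} (h : p = q) (x : V p) :
    f q (castLM (V := V) h x) = castLM (V := W) h (f p x) := by subst h; rfl

end Aux

section Aux2
variable {V₁ V₂ W₁ W₂ : ℤ → Type}
  [∀ n, AddCommGroup (V₁ n)] [∀ n, Module ℚ (V₁ n)]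
  [∀ n, AddCommGroup (V₂ n)] [∀ n, Module ℚ (V₂ n)]
  [∀ n, AddCommGroup (W₁ n)] [∀ n, Module ℚ (W₁ n)]
  [∀ n, AddCommGroup (W₂ n)] [∀ n, Module ℚ (W₂ n)]

lemma tOp_lof (k₁ k₂ : ℤ) (F : ∀ a, V₁ a →ₗ[ℚ] W₁ (a + k₁)) (G : ∀ b, V₂ b →ₗ[ℚ] W₂ (b + k₂))
    (n a b : ℤ) (hab : a + b = n) (t : V₁ a ⊗[ℚ] V₂ b) :
    tOp k₁ k₂ F G n (DirectSum.lof ℚ _ (fun p : {p : ℤ × ℤ // p.1 + p.2 = n} => V₁ p.1.1 ⊗[ℚ] V₂ p.1.2) ⟨(a, b), hab⟩ t)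
      = ((-1 : ℚ) ^ (k₂ * a)) •
        DirectSum.lof ℚ _ (fun q : {q : ℤ × ℤ // q.1 + q.2 = n + (k₁ + k₂)} => W₁ q.1.1 ⊗[ℚ] W₂ q.1.2)
          ⟨(a + k₁, b + k₂), by omega⟩ (TensorProduct.map (F a) (G b) t) := by
  simp [tOp]

lemma castLM_T2_lof {n n' : ℤ} (h : n = n') (a b : ℤ) (hab : a + b = n)
    (t : V₁ a ⊗[ℚ] V₂ b) :
    castLM (V := fun m => T2 V₁ V₂ m) h
        (DirectSum.lof ℚ _ (fun p : {p : ℤ × ℤ // p.1 + p.2 = n} => V₁ p.1.1 ⊗[ℚ] V₂ p.1.2) ⟨(a, b), hab⟩ t)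
      = DirectSum.lof ℚ _ (fun p : {p : ℤ × ℤ // p.1 + p.2 = n'} => V₁ p.1.1 ⊗[ℚ] V₂ p.1.2) ⟨(a, b), by omega⟩ t := by
  subst h; rfl

lemma lof_shift {a a' b b' n : ℤ} (ha : a = a') (hb : b = b') (hab : a + b = n)
    (x : V₁ a) (y : V₂ b) :
    DirectSum.lof ℚ _ (fun p : {p : ℤ × ℤ // p.1 + p.2 = n} => V₁ p.1.1 ⊗[ℚ] V₂ p.1.2) ⟨(a, b), hab⟩ (x ⊗ₜ[ℚ] y)
      = DirectSum.lof ℚ _ (fun p : {p : ℤ × ℤ // p.1 + p.2 = n} => V₁ p.1.1 ⊗[ℚ] V₂ p.1.2) ⟨(a', b'), by omega⟩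
          (castLM (V := V₁) ha x ⊗ₜ[ℚ] castLM (V := V₂) hb y) := by
  subst ha; subst hb; rfl

end Aux2
section Signs
lemma sNeg (m : ℤ) : (-1 : ℚ) ^ (-m) = (-1 : ℚ) ^ m := by
  rcases Int.even_or_odd m with h | h
  · rw [h.neg_one_zpow, (h.neg).neg_one_zpow]
  · rw [h.neg_one_zpow, (h.neg).neg_one_zpow]

lemma sAdd0 (m : ℤ) : (-1 : ℚ) ^ (m + (0:ℤ)) = (-1 : ℚ) ^ m := by norm_num

lemma sSub1 (m : ℤ) : (-1 : ℚ) ^ (m + (-1:ℤ)) = -((-1 : ℚ) ^ m) := by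
  rw [zpow_add₀ (by norm_num : (-1:ℚ) ≠ 0)]; norm_num

lemma sAdd1 (m : ℤ) : (-1 : ℚ) ^ (m + (1:ℤ)) = -((-1 : ℚ) ^ m) := by
  rw [zpow_add₀ (by norm_num : (-1:ℚ) ≠ 0)]; norm_num

lemma sSq (m : ℤ) : (-1 : ℚ) ^ m * (-1 : ℚ) ^ m = 1 := by
  rw [← zpow_add₀ (by norm_num : (-1:ℚ) ≠ 0)]
  exact Even.neg_one_zpow ⟨m, rfl⟩
end Signs
section Statement

variable (A₁ A₂ B₁ B₂ : ℤ → Type)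
  [∀ n, AddCommGroup (A₁ n)] [∀ n, Module ℚ (A₁ n)]
  [∀ n, AddCommGroup (A₂ n)] [∀ n, Module ℚ (A₂ n)]
  [∀ n, AddCommGroup (B₁ n)] [∀ n, Module ℚ (B₁ n)]
  [∀ n, AddCommGroup (B₂ n)] [∀ n, Module ℚ (B₂ n)]

/-- `i₁ ⊗ i₂` on the tensor product of complexes. -/
def iT (i₁ : ∀ n, A₁ n →ₗ[ℚ] B₁ n) (i₂ : ∀ n, A₂ n →ₗ[ℚ] B₂ n) (n : ℤ) :
    T2 A₁ A₂ n →ₗ[ℚ] T2 B₁ B₂ n :=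
  (castLM (V := fun m => T2 B₁ B₂ m) (show n + ((0 : ℤ) + 0) = n by omega)).comp
    (tOp 0 0 (sh0 i₁) (sh0 i₂) n)

/-- `p₁ ⊗ p₂` on the tensor product of complexes. -/
def pT (p₁ : ∀ n, B₁ n →ₗ[ℚ] A₁ n) (p₂ : ∀ n, B₂ n →ₗ[ℚ] A₂ n) (n : ℤ) :
    T2 B₁ B₂ n →ₗ[ℚ] T2 A₁ A₂ n :=
  (castLM (V := fun m => T2 A₁ A₂ m) (show n + ((0 : ℤ) + 0) = n by omega)).comp
    (tOp 0 0 (sh0 p₁) (sh0 p₂) n)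

/-- The differential `d ⊗ 1 + 1 ⊗ d` (with Koszul signs) on the tensor product. -/
def dT (d₁ : ∀ n, B₁ n →ₗ[ℚ] B₁ (n + 1)) (d₂ : ∀ n, B₂ n →ₗ[ℚ] B₂ (n + 1)) (n : ℤ) :
    T2 B₁ B₂ n →ₗ[ℚ] T2 B₁ B₂ (n + 1) :=
  (castLM (V := fun m => T2 B₁ B₂ m) (show n + ((1 : ℤ) + 0) = n + 1 by omega)).comp
    (tOp 1 0 d₁ (sh0 fun _ => LinearMap.id) n)
  + (castLM (V := fun m => T2 B₁ B₂ m) (show n + ((0 : ℤ) + 1) = n + 1 by omega)).comp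
    (tOp 0 1 (sh0 fun _ => LinearMap.id) d₂ n)

/-- The homotopy `h₁ ⊗ 1 + (i₁p₁) ⊗ h₂` on the tensor product. -/
def hT (i₁ : ∀ n, A₁ n →ₗ[ℚ] B₁ n) (p₁ : ∀ n, B₁ n →ₗ[ℚ] A₁ n)
    (h₁ : ∀ n, B₁ n →ₗ[ℚ] B₁ (n + (-1))) (h₂ : ∀ n, B₂ n →ₗ[ℚ] B₂ (n + (-1))) (n : ℤ) :
    T2 B₁ B₂ n →ₗ[ℚ] T2 B₁ B₂ (n + (-1)) :=
  (castLM (V := fun m => T2 B₁ B₂ m) (show n + ((-1 : ℤ) + 0) = n + (-1) by omega)).comp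
    (tOp (-1) 0 h₁ (sh0 fun _ => LinearMap.id) n)
  + (castLM (V := fun m => T2 B₁ B₂ m) (show n + ((0 : ℤ) + (-1)) = n + (-1) by omega)).comp
    (tOp 0 (-1) (sh0 fun a => (i₁ a).comp (p₁ a)) h₂ n)

/-- `(i₁p₁) ⊗ (i₂p₂)` on the tensor product. -/
def ipT (i₁ : ∀ n, A₁ n →ₗ[ℚ] B₁ n) (p₁ : ∀ n, B₁ n →ₗ[ℚ] A₁ n)
    (i₂ : ∀ n, A₂ n →ₗ[ℚ] B₂ n) (p₂ : ∀ n, B₂ n →ₗ[ℚ] A₂ n) (n : ℤ) :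
    T2 B₁ B₂ n →ₗ[ℚ] T2 B₁ B₂ n :=
  (castLM (V := fun m => T2 B₁ B₂ m) (show n + ((0 : ℤ) + 0) = n by omega)).comp
    (tOp 0 0 (sh0 fun a => (i₁ a).comp (p₁ a)) (sh0 fun b => (i₂ b).comp (p₂ b)) n)

/-- The homotopy `h₁ ⊗ (i₂p₂) + 1 ⊗ h₂`, the conjugate of `h₁ ⊗ 1 + (i₁p₁) ⊗ h₂` by the
symmetry constraint `(1 2)`. -/
def hT' (i₂ : ∀ n, A₂ n →ₗ[ℚ] B₂ n) (p₂ : ∀ n, B₂ n →ₗ[ℚ] A₂ n)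
    (h₁ : ∀ n, B₁ n →ₗ[ℚ] B₁ (n + (-1))) (h₂ : ∀ n, B₂ n →ₗ[ℚ] B₂ (n + (-1))) (n : ℤ) :
    T2 B₁ B₂ n →ₗ[ℚ] T2 B₁ B₂ (n + (-1)) :=
  (castLM (V := fun m => T2 B₁ B₂ m) (show n + ((-1 : ℤ) + 0) = n + (-1) by omega)).comp
    (tOp (-1) 0 h₁ (sh0 fun b => (i₂ b).comp (p₂ b)) n)
  + (castLM (V := fun m => T2 B₁ B₂ m) (show n + ((0 : ℤ) + (-1)) = n + (-1) by omega)).comp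
    (tOp 0 (-1) (sh0 fun _ => LinearMap.id) h₂ n)

section KeyWork
variable {C₁ C₂ D₁ D₂ : ℤ → Type}
  [∀ n, AddCommGroup (C₁ n)] [∀ n, Module ℚ (C₁ n)]
  [∀ n, AddCommGroup (C₂ n)] [∀ n, Module ℚ (C₂ n)]
  [∀ n, AddCommGroup (D₁ n)] [∀ n, Module ℚ (D₁ n)]
  [∀ n, AddCommGroup (D₂ n)] [∀ n, Module ℚ (D₂ n)]

set_option maxHeartbeats 2000000 in
lemma key' (dC₂ : ∀ n, C₂ n →ₗ[ℚ] C₂ (n + 1))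
    (dD₁ : ∀ n, D₁ n →ₗ[ℚ] D₁ (n + 1)) (dD₂ : ∀ n, D₂ n →ₗ[ℚ] D₂ (n + 1))
    (i₁ : ∀ n, C₁ n →ₗ[ℚ] D₁ n) (p₁ : ∀ n, D₁ n →ₗ[ℚ] C₁ n)
    (h₁ : ∀ n, D₁ n →ₗ[ℚ] D₁ (n + (-1)))
    (i₂ : ∀ n, C₂ n →ₗ[ℚ] D₂ n) (p₂ : ∀ n, D₂ n →ₗ[ℚ] C₂ n)
    (h₂ : ∀ n, D₂ n →ₗ[ℚ] D₂ (n + (-1)))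
    (hi₂ : ∀ n x, dD₂ n (i₂ n x) = i₂ (n + 1) (dC₂ n x))
    (hp₂ : ∀ n x, dC₂ n (p₂ n x) = p₂ (n + 1) (dD₂ n x))
    (hh₁ : ∀ n x, castLM (V := D₁) (show n + (-1) + 1 = n from neg_add_cancel_right n 1) (dD₁ (n + (-1)) (h₁ n x))
        + castLM (V := D₁) (show n + 1 + (-1) = n from add_neg_cancel_right n 1) (h₁ (n + 1) (dD₁ n x))
      = x - i₁ n (p₁ n x))
    (hh₂ : ∀ n x, castLM (V := D₂) (show n + (-1) + 1 = n from neg_add_cancel_right n 1) (dD₂ (n + (-1)) (h₂ n x))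
        + castLM (V := D₂) (show n + 1 + (-1) = n from add_neg_cancel_right n 1) (h₂ (n + 1) (dD₂ n x))
      = x - i₂ n (p₂ n x))
    (n a b : ℤ) (hab : a + b = n) (x : D₁ a) (y : D₂ b) :
    castLM (V := fun m => T2 D₁ D₂ m) (show n + (-1) + 1 = n from neg_add_cancel_right n 1)
        (dT D₁ D₂ dD₁ dD₂ (n + (-1)) (hT' C₂ D₁ D₂ i₂ p₂ h₁ h₂ n
          (DirectSum.lof ℚ _ (fun p : {p : ℤ × ℤ // p.1 + p.2 = n} => D₁ p.1.1 ⊗[ℚ] D₂ p.1.2) ⟨(a, b), hab⟩ (x ⊗ₜ[ℚ] y))))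
      + castLM (V := fun m => T2 D₁ D₂ m) (show n + 1 + (-1) = n from add_neg_cancel_right n 1)
        (hT' C₂ D₁ D₂ i₂ p₂ h₁ h₂ (n + 1) (dT D₁ D₂ dD₁ dD₂ n
          (DirectSum.lof ℚ _ (fun p : {p : ℤ × ℤ // p.1 + p.2 = n} => D₁ p.1.1 ⊗[ℚ] D₂ p.1.2) ⟨(a, b), hab⟩ (x ⊗ₜ[ℚ] y))))
      = DirectSum.lof ℚ _ (fun p : {p : ℤ × ℤ // p.1 + p.2 = n} => D₁ p.1.1 ⊗[ℚ] D₂ p.1.2) ⟨(a, b), hab⟩ (x ⊗ₜ[ℚ] y)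
        - ipT C₁ C₂ D₁ D₂ i₁ p₁ i₂ p₂ n
          (DirectSum.lof ℚ _ (fun p : {p : ℤ × ℤ // p.1 + p.2 = n} => D₁ p.1.1 ⊗[ℚ] D₂ p.1.2) ⟨(a, b), hab⟩ (x ⊗ₜ[ℚ] y)) := by
  simp only [hT', dT, ipT, LinearMap.add_apply, LinearMap.comp_apply, tOp_lof,
    castLM_T2_lof, map_add, map_smul, map_neg, TensorProduct.map_tmul, sh0,
    LinearMap.id_coe, id_eq,
    cast_natural 1 dD₁, cast_natural 1 dD₂, cast_natural (-1) h₁, cast_natural (-1) h₂,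
    cast_natural0 i₂, cast_natural0 p₂,
    castLM_castLM,
    hi₂, hp₂,
    lof_shift (show a + -1 + 1 = a by omega) (show b + 0 + 0 = b by omega),
    lof_shift (show a + -1 + 0 = a + -1 by omega) (show b + 0 + 1 = b + 1 by omega),
    lof_shift (show a + 0 + 1 = a + 1 by omega) (show b + -1 + 0 = b + -1 by omega),
    lof_shift (show a + 0 + 0 = a by omega) (show b + -1 + 1 = b by omega),
    lof_shift (show a + 1 + -1 = a by omega) (show b + 0 + 0 = b by omega),
    lof_shift (show a + 1 + 0 = a + 1 by omega) (show b + 0 + -1 = b + -1 by omega),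
    lof_shift (show a + 0 + -1 = a + -1 by omega) (show b + 1 + 0 = b + 1 by omega),
    lof_shift (show a + 0 + 0 = a by omega) (show b + 1 + -1 = b by omega),
    lof_shift (show a + 0 = a by omega) (show b + 0 = b by omega),
    smul_add, smul_neg, neg_smul, smul_smul, zero_mul, one_mul, neg_one_mul, zpow_zero,
    sNeg, sAdd0, sSub1, sAdd1, sSq, one_smul, mul_one]
  simp only [hT', dT, ipT, LinearMap.add_apply, LinearMap.comp_apply, tOp_lof,
    castLM_T2_lof, map_add, map_smul, map_neg, TensorProduct.map_tmul, sh0,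
    LinearMap.id_coe, id_eq,
    cast_natural 1 dD₁, cast_natural 1 dD₂, cast_natural (-1) h₁, cast_natural (-1) h₂,
    cast_natural0 i₂, cast_natural0 p₂,
    castLM_castLM, castLM_rfl,
    hi₂, hp₂,
    lof_shift (show a + -1 + 1 = a by omega) (show b + 0 + 0 = b by omega),
    lof_shift (show a + -1 + 0 = a + -1 by omega) (show b + 0 + 1 = b + 1 by omega),
    lof_shift (show a + 0 + 1 = a + 1 by omega) (show b + -1 + 0 = b + -1 by omega),
    lof_shift (show a + 0 + 0 = a by omega) (show b + -1 + 1 = b by omega),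
    lof_shift (show a + 1 + -1 = a by omega) (show b + 0 + 0 = b by omega),
    lof_shift (show a + 1 + 0 = a + 1 by omega) (show b + 0 + -1 = b + -1 by omega),
    lof_shift (show a + 0 + -1 = a + -1 by omega) (show b + 1 + 0 = b + 1 by omega),
    lof_shift (show a + 0 + 0 = a by omega) (show b + 1 + -1 = b by omega),
    lof_shift (show a + 0 = a by omega) (show b + 0 = b by omega),
    smul_add, smul_neg, neg_smul, smul_smul, zero_mul, one_mul, neg_one_mul, zpow_zero,
    sNeg, sAdd0, sSub1, sAdd1, sSq, one_smul, mul_one]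
  rw [eq_sub_of_add_eq (hh₁ a x), eq_sub_of_add_eq (hh₂ b y)]
  simp only [sub_tmul, tmul_sub, map_sub, map_add]
  module

set_option maxHeartbeats 2000000 in
lemma key (dC₁ : ∀ n, C₁ n →ₗ[ℚ] C₁ (n + 1))
    (dD₁ : ∀ n, D₁ n →ₗ[ℚ] D₁ (n + 1)) (dD₂ : ∀ n, D₂ n →ₗ[ℚ] D₂ (n + 1))
    (i₁ : ∀ n, C₁ n →ₗ[ℚ] D₁ n) (p₁ : ∀ n, D₁ n →ₗ[ℚ] C₁ n)
    (h₁ : ∀ n, D₁ n →ₗ[ℚ] D₁ (n + (-1)))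
    (i₂ : ∀ n, C₂ n →ₗ[ℚ] D₂ n) (p₂ : ∀ n, D₂ n →ₗ[ℚ] C₂ n)
    (h₂ : ∀ n, D₂ n →ₗ[ℚ] D₂ (n + (-1)))
    (hi₁ : ∀ n x, dD₁ n (i₁ n x) = i₁ (n + 1) (dC₁ n x))
    (hp₁ : ∀ n x, dC₁ n (p₁ n x) = p₁ (n + 1) (dD₁ n x))
    (hh₁ : ∀ n x, castLM (V := D₁) (show n + (-1) + 1 = n from neg_add_cancel_right n 1) (dD₁ (n + (-1)) (h₁ n x))
        + castLM (V := D₁) (show n + 1 + (-1) = n from add_neg_cancel_right n 1) (h₁ (n + 1) (dD₁ n x))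
      = x - i₁ n (p₁ n x))
    (hh₂ : ∀ n x, castLM (V := D₂) (show n + (-1) + 1 = n from neg_add_cancel_right n 1) (dD₂ (n + (-1)) (h₂ n x))
        + castLM (V := D₂) (show n + 1 + (-1) = n from add_neg_cancel_right n 1) (h₂ (n + 1) (dD₂ n x))
      = x - i₂ n (p₂ n x))
    (n a b : ℤ) (hab : a + b = n) (x : D₁ a) (y : D₂ b) :
    castLM (V := fun m => T2 D₁ D₂ m) (show n + (-1) + 1 = n from neg_add_cancel_right n 1)
        (dT D₁ D₂ dD₁ dD₂ (n + (-1)) (hT C₁ D₁ D₂ i₁ p₁ h₁ h₂ n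
          (DirectSum.lof ℚ _ (fun p : {p : ℤ × ℤ // p.1 + p.2 = n} => D₁ p.1.1 ⊗[ℚ] D₂ p.1.2) ⟨(a, b), hab⟩ (x ⊗ₜ[ℚ] y))))
      + castLM (V := fun m => T2 D₁ D₂ m) (show n + 1 + (-1) = n from add_neg_cancel_right n 1)
        (hT C₁ D₁ D₂ i₁ p₁ h₁ h₂ (n + 1) (dT D₁ D₂ dD₁ dD₂ n
          (DirectSum.lof ℚ _ (fun p : {p : ℤ × ℤ // p.1 + p.2 = n} => D₁ p.1.1 ⊗[ℚ] D₂ p.1.2) ⟨(a, b), hab⟩ (x ⊗ₜ[ℚ] y))))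
      = DirectSum.lof ℚ _ (fun p : {p : ℤ × ℤ // p.1 + p.2 = n} => D₁ p.1.1 ⊗[ℚ] D₂ p.1.2) ⟨(a, b), hab⟩ (x ⊗ₜ[ℚ] y)
        - ipT C₁ C₂ D₁ D₂ i₁ p₁ i₂ p₂ n
          (DirectSum.lof ℚ _ (fun p : {p : ℤ × ℤ // p.1 + p.2 = n} => D₁ p.1.1 ⊗[ℚ] D₂ p.1.2) ⟨(a, b), hab⟩ (x ⊗ₜ[ℚ] y)) := by
  simp only [hT, dT, ipT, LinearMap.add_apply, LinearMap.comp_apply, tOp_lof,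
    castLM_T2_lof, map_add, map_smul, map_neg, TensorProduct.map_tmul, sh0,
    LinearMap.id_coe, id_eq,
    cast_natural 1 dD₁, cast_natural 1 dD₂, cast_natural (-1) h₁, cast_natural (-1) h₂,
    cast_natural0 i₁, cast_natural0 p₁,
    castLM_castLM,
    hi₁, hp₁,
    lof_shift (show a + -1 + 1 = a by omega) (show b + 0 + 0 = b by omega),
    lof_shift (show a + -1 + 0 = a + -1 by omega) (show b + 0 + 1 = b + 1 by omega),
    lof_shift (show a + 0 + 1 = a + 1 by omega) (show b + -1 + 0 = b + -1 by omega),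
    lof_shift (show a + 0 + 0 = a by omega) (show b + -1 + 1 = b by omega),
    lof_shift (show a + 1 + -1 = a by omega) (show b + 0 + 0 = b by omega),
    lof_shift (show a + 1 + 0 = a + 1 by omega) (show b + 0 + -1 = b + -1 by omega),
    lof_shift (show a + 0 + -1 = a + -1 by omega) (show b + 1 + 0 = b + 1 by omega),
    lof_shift (show a + 0 + 0 = a by omega) (show b + 1 + -1 = b by omega),
    lof_shift (show a + 0 = a by omega) (show b + 0 = b by omega),
    smul_add, smul_neg, neg_smul, smul_smul, zero_mul, one_mul, neg_one_mul, zpow_zero,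
    sNeg, sAdd0, sSub1, sAdd1, sSq, one_smul, mul_one]
  simp only [hT, dT, ipT, LinearMap.add_apply, LinearMap.comp_apply, tOp_lof,
    castLM_T2_lof, map_add, map_smul, map_neg, TensorProduct.map_tmul, sh0,
    LinearMap.id_coe, id_eq,
    cast_natural 1 dD₁, cast_natural 1 dD₂, cast_natural (-1) h₁, cast_natural (-1) h₂,
    cast_natural0 i₁, cast_natural0 p₁,
    castLM_castLM, castLM_rfl,
    hi₁, hp₁,
    lof_shift (show a + -1 + 1 = a by omega) (show b + 0 + 0 = b by omega),
    lof_shift (show a + -1 + 0 = a + -1 by omega) (show b + 0 + 1 = b + 1 by omega),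
    lof_shift (show a + 0 + 1 = a + 1 by omega) (show b + -1 + 0 = b + -1 by omega),
    lof_shift (show a + 0 + 0 = a by omega) (show b + -1 + 1 = b by omega),
    lof_shift (show a + 1 + -1 = a by omega) (show b + 0 + 0 = b by omega),
    lof_shift (show a + 1 + 0 = a + 1 by omega) (show b + 0 + -1 = b + -1 by omega),
    lof_shift (show a + 0 + -1 = a + -1 by omega) (show b + 1 + 0 = b + 1 by omega),
    lof_shift (show a + 0 + 0 = a by omega) (show b + 1 + -1 = b by omega),
    lof_shift (show a + 0 = a by omega) (show b + 0 = b by omega),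
    smul_add, smul_neg, neg_smul, smul_smul, zero_mul, one_mul, neg_one_mul, zpow_zero,
    sNeg, sAdd0, sSub1, sAdd1, sSq, one_smul, mul_one]
  rw [eq_sub_of_add_eq (hh₁ a x), eq_sub_of_add_eq (hh₂ b y)]
  simp only [sub_tmul, tmul_sub, map_sub, map_add]
  module

end KeyWork
/-- For SDRs `(A₁, B₁, i₁, p₁, h₁)` and `(A₂, B₂, i₂, p₂, h₂)`, the
non-symmetric tensor product homotopy `h₁⊗1 + (i₁p₁)⊗h₂` generally differs from its conjugate
by the symmetry `(1 2)`, which equals `h₁⊗(i₂p₂) + 1⊗h₂`; however, both are homotopies from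
`(i₁p₁)⊗(i₂p₂)` to the identity, so their average
`(1/2)(h₁⊗1 + (i₁p₁)⊗h₂ + h₁⊗(i₂p₂) + 1⊗h₂)` also satisfies `dh + hd = 1 − (i₁p₁)⊗(i₂p₂)`. -/
theorem conjugate_and_average_homotopies
    (dA₁ : ∀ n, A₁ n →ₗ[ℚ] A₁ (n + 1)) (dA₂ : ∀ n, A₂ n →ₗ[ℚ] A₂ (n + 1))
    (dB₁ : ∀ n, B₁ n →ₗ[ℚ] B₁ (n + 1)) (dB₂ : ∀ n, B₂ n →ₗ[ℚ] B₂ (n + 1))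
    (i₁ : ∀ n, A₁ n →ₗ[ℚ] B₁ n) (p₁ : ∀ n, B₁ n →ₗ[ℚ] A₁ n)
    (h₁ : ∀ n, B₁ n →ₗ[ℚ] B₁ (n + (-1)))
    (i₂ : ∀ n, A₂ n →ₗ[ℚ] B₂ n) (p₂ : ∀ n, B₂ n →ₗ[ℚ] A₂ n)
    (h₂ : ∀ n, B₂ n →ₗ[ℚ] B₂ (n + (-1)))
    (hddA₁ : ∀ n x, dA₁ (n + 1) (dA₁ n x) = 0) (hddA₂ : ∀ n x, dA₂ (n + 1) (dA₂ n x) = 0)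
    (hddB₁ : ∀ n x, dB₁ (n + 1) (dB₁ n x) = 0) (hddB₂ : ∀ n x, dB₂ (n + 1) (dB₂ n x) = 0)
    (hi₁ : ∀ n x, dB₁ n (i₁ n x) = i₁ (n + 1) (dA₁ n x))
    (hi₂ : ∀ n x, dB₂ n (i₂ n x) = i₂ (n + 1) (dA₂ n x))
    (hp₁ : ∀ n x, dA₁ n (p₁ n x) = p₁ (n + 1) (dB₁ n x))
    (hp₂ : ∀ n x, dA₂ n (p₂ n x) = p₂ (n + 1) (dB₂ n x))
    (hpi₁ : ∀ n x, p₁ n (i₁ n x) = x) (hpi₂ : ∀ n x, p₂ n (i₂ n x) = x)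
    (hh₁ : ∀ n x, castLM (V := B₁) (show n + (-1) + 1 = n by omega) (dB₁ (n + (-1)) (h₁ n x))
        + castLM (V := B₁) (show n + 1 + (-1) = n by omega) (h₁ (n + 1) (dB₁ n x))
      = x - i₁ n (p₁ n x))
    (hh₂ : ∀ n x, castLM (V := B₂) (show n + (-1) + 1 = n by omega) (dB₂ (n + (-1)) (h₂ n x))
        + castLM (V := B₂) (show n + 1 + (-1) = n by omega) (h₂ (n + 1) (dB₂ n x))
      = x - i₂ n (p₂ n x)) :
    (∀ (n : ℤ) (x : T2 B₁ B₂ n),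
        castLM (V := fun m => T2 B₁ B₂ m) (show n + (-1) + 1 = n by omega)
            (dT B₁ B₂ dB₁ dB₂ (n + (-1)) (hT' A₂ B₁ B₂ i₂ p₂ h₁ h₂ n x))
          + castLM (V := fun m => T2 B₁ B₂ m) (show n + 1 + (-1) = n by omega)
            (hT' A₂ B₁ B₂ i₂ p₂ h₁ h₂ (n + 1) (dT B₁ B₂ dB₁ dB₂ n x))
        = x - ipT A₁ A₂ B₁ B₂ i₁ p₁ i₂ p₂ n x) ∧
    (∀ (n : ℤ) (x : T2 B₁ B₂ n),
        castLM (V := fun m => T2 B₁ B₂ m) (show n + (-1) + 1 = n by omega)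
            (dT B₁ B₂ dB₁ dB₂ (n + (-1))
              ((2 : ℚ)⁻¹ • (hT A₁ B₁ B₂ i₁ p₁ h₁ h₂ n + hT' A₂ B₁ B₂ i₂ p₂ h₁ h₂ n) x))
          + castLM (V := fun m => T2 B₁ B₂ m) (show n + 1 + (-1) = n by omega)
            (((2 : ℚ)⁻¹ • (hT A₁ B₁ B₂ i₁ p₁ h₁ h₂ (n + 1) + hT' A₂ B₁ B₂ i₂ p₂ h₁ h₂ (n + 1)))
              (dT B₁ B₂ dB₁ dB₂ n x))
        = x - ipT A₁ A₂ B₁ B₂ i₁ p₁ i₂ p₂ n x) := by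
  have K' : ∀ (n : ℤ) (x : T2 B₁ B₂ n),
      castLM (V := fun m => T2 B₁ B₂ m) (show n + (-1) + 1 = n by omega)
          (dT B₁ B₂ dB₁ dB₂ (n + (-1)) (hT' A₂ B₁ B₂ i₂ p₂ h₁ h₂ n x))
        + castLM (V := fun m => T2 B₁ B₂ m) (show n + 1 + (-1) = n by omega)
          (hT' A₂ B₁ B₂ i₂ p₂ h₁ h₂ (n + 1) (dT B₁ B₂ dB₁ dB₂ n x))
      = x - ipT A₁ A₂ B₁ B₂ i₁ p₁ i₂ p₂ n x := by
    intro n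
    suffices h : (castLM (V := fun m => T2 B₁ B₂ m) (show n + (-1) + 1 = n by omega)).comp
        ((dT B₁ B₂ dB₁ dB₂ (n + (-1))).comp (hT' A₂ B₁ B₂ i₂ p₂ h₁ h₂ n))
        + (castLM (V := fun m => T2 B₁ B₂ m) (show n + 1 + (-1) = n by omega)).comp
        ((hT' A₂ B₁ B₂ i₂ p₂ h₁ h₂ (n + 1)).comp (dT B₁ B₂ dB₁ dB₂ n))
        = LinearMap.id - ipT A₁ A₂ B₁ B₂ i₁ p₁ i₂ p₂ n by
      intro x
      have hx := DFunLike.congr_fun h x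
      simpa only [LinearMap.add_apply, LinearMap.comp_apply, LinearMap.sub_apply,
        LinearMap.id_apply] using hx
    apply DirectSum.linearMap_ext
    rintro ⟨⟨a, b⟩, hab⟩
    apply TensorProduct.ext'
    intro x y
    simp only [LinearMap.add_apply, LinearMap.comp_apply, LinearMap.sub_apply,
      LinearMap.id_apply]
    exact key' dA₂ dB₁ dB₂ i₁ p₁ h₁ i₂ p₂ h₂ hi₂ hp₂ hh₁ hh₂ n a b hab x y
  have K : ∀ (n : ℤ) (x : T2 B₁ B₂ n),
      castLM (V := fun m => T2 B₁ B₂ m) (show n + (-1) + 1 = n by omega)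
          (dT B₁ B₂ dB₁ dB₂ (n + (-1)) (hT A₁ B₁ B₂ i₁ p₁ h₁ h₂ n x))
        + castLM (V := fun m => T2 B₁ B₂ m) (show n + 1 + (-1) = n by omega)
          (hT A₁ B₁ B₂ i₁ p₁ h₁ h₂ (n + 1) (dT B₁ B₂ dB₁ dB₂ n x))
      = x - ipT A₁ A₂ B₁ B₂ i₁ p₁ i₂ p₂ n x := by
    intro n
    suffices h : (castLM (V := fun m => T2 B₁ B₂ m) (show n + (-1) + 1 = n by omega)).comp
        ((dT B₁ B₂ dB₁ dB₂ (n + (-1))).comp (hT A₁ B₁ B₂ i₁ p₁ h₁ h₂ n))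
        + (castLM (V := fun m => T2 B₁ B₂ m) (show n + 1 + (-1) = n by omega)).comp
        ((hT A₁ B₁ B₂ i₁ p₁ h₁ h₂ (n + 1)).comp (dT B₁ B₂ dB₁ dB₂ n))
        = LinearMap.id - ipT A₁ A₂ B₁ B₂ i₁ p₁ i₂ p₂ n by
      intro x
      have hx := DFunLike.congr_fun h x
      simpa only [LinearMap.add_apply, LinearMap.comp_apply, LinearMap.sub_apply,
        LinearMap.id_apply] using hx
    apply DirectSum.linearMap_ext
    rintro ⟨⟨a, b⟩, hab⟩
    apply TensorProduct.ext'
    intro x y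
    simp only [LinearMap.add_apply, LinearMap.comp_apply, LinearMap.sub_apply,
      LinearMap.id_apply]
    exact key dA₁ dB₁ dB₂ i₁ p₁ h₁ i₂ p₂ h₂ hi₁ hp₁ hh₁ hh₂ n a b hab x y
  refine ⟨K', fun n x => ?_⟩
  simp only [LinearMap.smul_apply, LinearMap.add_apply, map_add, map_smul, smul_add]
  have k1 := K n x
  have k2 := K' n x
  linear_combination (norm := module) ((2 : ℚ)⁻¹) • k1 + ((2 : ℚ)⁻¹) • k2

end Statement
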